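/- For any leaf ℓ in the DTSemNet encoding, val(ℓ) ≤ ∑_{i=1}^{k} |v i|, with equality iff every decision on the path of ℓ is satisfied (ε_ℓ(i)·v i > 0 for all i ∈ path(ℓ)). -/

import Mathlib

noncomputable def ReLU (x : ℝ) : ℝ := max x 0

lemma relu_abs (x : ℝ) : ReLU x + ReLU (-x) = |x| := by
  unfold ReLU
  rcases le_total x 0 with h | h
  · rw [max_eq_right h, max_eq_left (neg_nonneg.mpr h), abs_of_nonpos h, zero_add]
  · rw [max_eq_left h, max_eq_right (neg_nonpos.mpr h), abs_of_nonneg h, add_zero]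

lemma relu_le_abs (x : ℝ) : ReLU x ≤ |x| := by
  unfold ReLU
  exact max_le (le_abs_self x) (abs_nonneg x)

open Finset in
/-- Every leaf value is at most `∑ i |v i|`, with equality iff every decision
on the leaf's path is satisfied. -/
theorem leaf_value_le (k : ℕ) (L : Type) [Fintype L]
    (v : Fin k → ℝ) (hv : ∀ i, v i ≠ 0)
    (path : L → Finset (Fin k)) (ε : L → Fin k → ℝ)
    (hε : ∀ ℓ i, ε ℓ i = 1 ∨ ε ℓ i = -1)
    (val : L → ℝ)
    (hval : ∀ ℓ, val ℓ = (∑ i ∈ (path ℓ)ᶜ, (ReLU (v i) + ReLU (-v i)))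
      + ∑ i ∈ path ℓ, ReLU (ε ℓ i * v i)) :
    ∀ ℓ, val ℓ ≤ ∑ i, |v i| ∧
      (val ℓ = ∑ i, |v i| ↔ ∀ i ∈ path ℓ, 0 < ε ℓ i * v i) := by
  intro ℓ
  have hne : ∀ i, ε ℓ i * v i ≠ 0 := fun i =>
    mul_ne_zero (by rcases hε ℓ i with h | h <;> simp [h]) (hv i)
  have habs : ∀ i, |ε ℓ i * v i| = |v i| := fun i => by
    rcases hε ℓ i with h | h <;> simp [h, abs_mul]
  have hsplit : ∑ i, |v i| = (∑ i ∈ (path ℓ)ᶜ, |v i|) + ∑ i ∈ path ℓ, |v i| := by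
    rw [add_comm, Finset.sum_add_sum_compl]
  have hval' : val ℓ = (∑ i ∈ (path ℓ)ᶜ, |v i|) + ∑ i ∈ path ℓ, ReLU (ε ℓ i * v i) := by
    rw [hval ℓ]; congr 1; exact Finset.sum_congr rfl fun i _ => relu_abs _
  have hle : ∀ i ∈ path ℓ, ReLU (ε ℓ i * v i) ≤ |v i| := fun i _ =>
    (habs i ▸ relu_le_abs _)
  constructor
  · rw [hval', hsplit]
    exact add_le_add le_rfl (Finset.sum_le_sum hle)
  · rw [hval', hsplit, add_right_inj]
    constructor
    · intro h i hi
      have heq : ∀ j ∈ path ℓ, ReLU (ε ℓ j * v j) = |v j| :=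
        (Finset.sum_eq_sum_iff_of_le hle).mp h
      have h1 : ReLU (ε ℓ i * v i) = |v i| := heq i hi
      have h2 : 0 < |v i| := abs_pos.mpr (hv i)
      have h3 : 0 < ReLU (ε ℓ i * v i) := h1 ▸ h2
      have h4 : ReLU (ε ℓ i * v i) = ε ℓ i * v i := by
        unfold ReLU at *
        rcases max_cases (ε ℓ i * v i) 0 with ⟨h5, _⟩ | ⟨h5, _⟩
        · exact h5
        · exact absurd (h5 ▸ h3) (lt_irrefl 0)
      exact h4 ▸ h3
    · intro h
      apply Finset.sum_congr rfl
      intro i hi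
      rw [show ReLU (ε ℓ i * v i) = ε ℓ i * v i from max_eq_left (h i hi).le,
        ← habs i, abs_of_pos (h i hi)]
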